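/- For Re(q) > 0, P_{0,q} acts on the image of B_q by multiplication by e^(-t): for any φ ∈ L¹((0,∞), t^(2q-1)e^(-t)dt) and x in the disk |x-1/2|<1/2, (x+1)^(-2q) B_q[φ](x/(x+1)) = B_q[e^(-t) φ(t)](x). -/

import Mathlib

open MeasureTheory

noncomputable def Bq (q : ℂ) (φ : ℝ → ℂ) (x : ℂ) : ℂ :=
  x ^ (-2 * q) * ∫ t in Set.Ioi (0:ℝ),
    Complex.exp (-(t:ℂ) / x) * Complex.exp (t:ℂ) * φ t * (t:ℂ) ^ (2 * q - 1) *
      Complex.exp (-(t:ℂ))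

theorem P0_acts_as_mult_exp (q : ℂ) (hq : 0 < q.re) (φ : ℝ → ℂ)
    (hφ : IntegrableOn (fun t : ℝ => φ t * (t:ℂ) ^ (2 * q - 1) * (Real.exp (-t) : ℂ))
      (Set.Ioi 0))
    (x : ℂ) (hx : ‖x - 1/2‖ < 1/2) :
    (x + 1) ^ (-2 * q) * Bq q φ (x / (x + 1))
      = Bq q (fun t => (Real.exp (-t) : ℂ) * φ t) x := by
  have hre : 0 < x.re := by
    have h := Complex.abs_re_le_norm (x - 1/2)
    have : |x.re - 1/2| < 1/2 := by
      simpa using lt_of_le_of_lt h hx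
    have := abs_lt.mp this
    linarith [this.1]
  have hre1 : 0 < (x + 1).re := by simp [Complex.add_re]; linarith
  have hx0 : x ≠ 0 := by
    intro h; rw [h] at hre; simp at hre
  have hx1 : x + 1 ≠ 0 := by
    intro h; rw [h] at hre1; simp at hre1
  have hargx : |Complex.arg x| < Real.pi / 2 :=
    Complex.abs_arg_lt_pi_div_two_iff.mpr (Or.inl hre)
  have hargx1 : |Complex.arg (x + 1)| < Real.pi / 2 :=
    Complex.abs_arg_lt_pi_div_two_iff.mpr (Or.inl hre1)
  -- log of quotient
  have hlog : Complex.log (x / (x + 1)) = Complex.log x - Complex.log (x + 1) := by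
    have hexp : Complex.exp (Complex.log x - Complex.log (x + 1)) = x / (x + 1) := by
      rw [Complex.exp_sub, Complex.exp_log hx0, Complex.exp_log hx1]
    rw [← hexp, Complex.log_exp]
    · have := abs_lt.mp hargx
      have := abs_lt.mp hargx1
      simp only [Complex.sub_im, Complex.log_im]
      linarith [(abs_lt.mp hargx).1, (abs_lt.mp hargx).2,
        (abs_lt.mp hargx1).1, (abs_lt.mp hargx1).2]
    · have := abs_lt.mp hargx
      have := abs_lt.mp hargx1
      simp only [Complex.sub_im, Complex.log_im]
      have hπ : 0 < Real.pi := Real.pi_pos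
      linarith [(abs_lt.mp hargx).1, (abs_lt.mp hargx).2,
        (abs_lt.mp hargx1).1, (abs_lt.mp hargx1).2]
  have hq0 : x / (x + 1) ≠ 0 := div_ne_zero hx0 hx1
  -- powers
  have hpow : (x + 1) ^ (-2 * q) * (x / (x + 1)) ^ (-2 * q) = x ^ (-2 * q) := by
    rw [Complex.cpow_def_of_ne_zero hx1, Complex.cpow_def_of_ne_zero hq0,
      Complex.cpow_def_of_ne_zero hx0, ← Complex.exp_add, hlog]
    ring_nf
  -- integrand equality
  have hint : ∀ t ∈ Set.Ioi (0:ℝ),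
      Complex.exp (-(t:ℂ) / (x / (x + 1))) * Complex.exp (t:ℂ) * φ t *
          (t:ℂ) ^ (2 * q - 1) * Complex.exp (-(t:ℂ))
        = Complex.exp (-(t:ℂ) / x) * Complex.exp (t:ℂ) *
            ((Real.exp (-t) : ℂ) * φ t) * (t:ℂ) ^ (2 * q - 1) *
            Complex.exp (-(t:ℂ)) := by
    intro t _
    have hdiv : -(t:ℂ) / (x / (x + 1)) = -(t:ℂ) / x + -(t:ℂ) := by
      field_simp
      ring
    rw [hdiv, Complex.exp_add]
    have : ((Real.exp (-t) : ℝ) : ℂ) = Complex.exp (-(t:ℂ)) := by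
      rw [Complex.ofReal_exp]; push_cast; ring_nf
    rw [this]
    ring
  unfold Bq
  rw [setIntegral_congr_fun measurableSet_Ioi hint]
  rw [← mul_assoc, hpow]
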